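/- For k ∈ [n-1], the quotient of the permutohedron S_n by the lattice congruence generated by the pair (identity, σ_k) is isomorphic as a lattice to the product S_k × S_{n-k}. -/

import Mathlib

/-- The inversion set of a permutation `w`. -/
def inversions {m : ℕ} (w : Equiv.Perm (Fin m)) : Set (Fin m × Fin m) :=
  {p | p.1 < p.2 ∧ w⁻¹ p.2 < w⁻¹ p.1}

/-- A lattice congruence: an equivalence relation compatible with joins and meets. -/
def IsLatticeCongruence {α : Type*} [Lattice α] (r : α → α → Prop) : Prop :=
  Equivalence r ∧ (∀ a b c d, r a b → r c d → r (a ⊔ c) (b ⊔ d)) ∧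
    (∀ a b c d, r a b → r c d → r (a ⊓ c) (b ⊓ d))

/-- The smallest lattice congruence identifying `x` and `y`. -/
def congGen {α : Type*} [Lattice α] (x y : α) (a b : α) : Prop :=
  ∀ r : α → α → Prop, IsLatticeCongruence r → r x y → r a b

theorem Equiv.Perm.apply_inv_self {α : Type*} (f : Equiv.Perm α) (x : α) : f (f⁻¹ x) = x :=
  f.apply_symm_apply x

theorem Equiv.Perm.inv_apply_self {α : Type*} (f : Equiv.Perm α) (x : α) : f⁻¹ (f x) = x :=
  f.symm_apply_apply x

namespace S13
variable {m : ℕ}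

lemma mem_inv {w : Equiv.Perm (Fin m)} {a b : Fin m} :
    (a, b) ∈ inversions w ↔ a < b ∧ w⁻¹ b < w⁻¹ a := Iff.rfl

lemma inversions_one : inversions (1 : Equiv.Perm (Fin m)) = ∅ := by
  ext ⟨a,b⟩
  simp only [inversions, Set.mem_setOf_eq, Set.mem_empty_iff_false, iff_false, not_and]
  intro h h'
  simp only [inv_one, Equiv.Perm.one_apply] at h'
  exact absurd h' (not_lt.mpr h.le)

lemma inv_trans {w : Equiv.Perm (Fin m)} {a b c : Fin m}
    (h1 : (a,b) ∈ inversions w) (h2 : (b,c) ∈ inversions w) : (a,c) ∈ inversions w :=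
  ⟨h1.1.trans h2.1, h2.2.trans h1.2⟩

lemma inv_btw {w : Equiv.Perm (Fin m)} {a b c : Fin m}
    (h1 : (a,c) ∈ inversions w) (hab : a < b) (hbc : b < c) :
    (a,b) ∈ inversions w ∨ (b,c) ∈ inversions w := by
  rcases lt_or_ge (w⁻¹ b) (w⁻¹ a) with h | h
  · exact Or.inl ⟨hab, h⟩
  · exact Or.inr ⟨hbc, lt_of_lt_of_le h1.2 h⟩

lemma swap_val {p p' x : Fin m} :
    (Equiv.swap p p' x).val =
      if x.val = p.val then p'.val else if x.val = p'.val then p.val else x.val := by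
  rw [Equiv.swap_apply_def]
  split_ifs with h1 h2 h3 h4 h5 <;> simp_all [Fin.ext_iff]

lemma swap_lt_iff {p p' a b : Fin m} (hpp : p.val + 1 = p'.val) :
    Equiv.swap p p' b < Equiv.swap p p' a ↔
      (b < a ∧ ¬(a = p' ∧ b = p)) ∨ (a = p ∧ b = p') := by
  simp only [Fin.lt_def, swap_val, Fin.ext_iff]
  split_ifs <;> omega

lemma swap_inversions (w : Equiv.Perm (Fin m)) (p p' : Fin m)
    (hpp : p.val + 1 = p'.val) (hab : w p < w p') :
    inversions (w * Equiv.swap p p') = insert (w p, w p') (inversions w) ∧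
      (w p, w p') ∉ inversions w := by
  have hposx : ∀ v, (w * Equiv.swap p p')⁻¹ v = Equiv.swap p p' (w⁻¹ v) := by
    intro v
    rw [mul_inv_rev, Equiv.Perm.mul_apply, Equiv.swap_inv]
  constructor
  · ext ⟨u, v⟩
    simp only [mem_inv, Set.mem_insert_iff, Prod.mk.injEq, hposx]
    rw [swap_lt_iff hpp]
    constructor
    · rintro ⟨huv, (⟨h1, h2⟩ | ⟨h1, h2⟩)⟩
      · exact Or.inr ⟨huv, h1⟩
      · exact Or.inl ⟨Equiv.Perm.inv_eq_iff_eq.mp h1, Equiv.Perm.inv_eq_iff_eq.mp h2⟩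
    · rintro (⟨h1, h2⟩ | ⟨huv, hlt⟩)
      · subst h1; subst h2
        exact ⟨hab, Or.inr ⟨Equiv.Perm.inv_apply_self _ _, Equiv.Perm.inv_apply_self _ _⟩⟩
      · refine ⟨huv, Or.inl ⟨hlt, ?_⟩⟩
        rintro ⟨h1, h2⟩
        rw [Equiv.Perm.inv_eq_iff_eq] at h1 h2
        subst h1; subst h2
        exact absurd hab (not_lt.mpr huv.le)
  · rintro ⟨_, h⟩
    rw [Equiv.Perm.inv_apply_self, Equiv.Perm.inv_apply_self] at h
    rw [Fin.lt_def] at h; omega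

lemma exists_adjacent_diff {x y : Equiv.Perm (Fin m)}
    (hsub : inversions y ⊆ inversions x) {a b : Fin m}
    (hmem : (a, b) ∈ inversions x \ inversions y) :
    ∃ a' b', (a', b') ∈ inversions x \ inversions y ∧ (x⁻¹ b').val + 1 = (x⁻¹ a').val := by
  suffices H : ∀ g a b, (a, b) ∈ inversions x \ inversions y →
      (x⁻¹ a).val - (x⁻¹ b).val = g →
      ∃ a' b', (a', b') ∈ inversions x \ inversions y ∧ (x⁻¹ b').val + 1 = (x⁻¹ a').val by
    exact H _ a b hmem rfl
  intro g
  induction g using Nat.strong_induction_on with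
  | _ g IH =>
    rintro a b ⟨hx, hnot⟩ hg
    rw [mem_inv] at hx
    obtain ⟨hab, hba⟩ := hx
    rw [Fin.lt_def] at hba
    by_cases hadj : (x⁻¹ b).val + 1 = (x⁻¹ a).val
    · exact ⟨a, b, ⟨mem_inv.mpr ⟨hab, by rw [Fin.lt_def]; omega⟩, hnot⟩, hadj⟩
    · have hglt : 2 ≤ g := by omega
      obtain ⟨q, hqv⟩ : ∃ q : Fin m, q.val = (x⁻¹ b).val + 1 :=
        ⟨⟨(x⁻¹ b).val + 1, by omega⟩, rfl⟩
      obtain ⟨c, hcq⟩ : ∃ c, c = x q := ⟨_, rfl⟩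
      have hposc : (x⁻¹ c).val = (x⁻¹ b).val + 1 := by
        rw [hcq, Equiv.Perm.inv_apply_self, hqv]
      have hca : c ≠ a := fun h => hadj (by rw [← h, hposc])
      have hcb : c ≠ b := fun h => by rw [h] at hposc; omega
      rcases lt_trichotomy c a with hlt | heq | hgt
      · refine ⟨c, b, ⟨mem_inv.mpr ⟨hlt.trans hab, by rw [Fin.lt_def, hposc]; omega⟩, ?_⟩, by omega⟩
        intro hyc
        rcases inv_btw hyc hlt hab with h' | h'
        · have := (mem_inv.mp (hsub h')).2
          rw [Fin.lt_def, hposc] at this; omega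
        · exact hnot h'
      · exact absurd heq hca
      · rcases lt_trichotomy c b with hlt' | heq' | hgt'
        · by_cases hyc : (c, b) ∈ inversions y
          · have hmem' : (a, c) ∈ inversions x \ inversions y := by
              refine ⟨mem_inv.mpr ⟨hgt, by rw [Fin.lt_def, hposc]; omega⟩, ?_⟩
              intro h'
              exact hnot (inv_trans h' hyc)
            exact IH ((x⁻¹ a).val - (x⁻¹ c).val) (by omega) a c hmem' rfl
          · exact ⟨c, b, ⟨mem_inv.mpr ⟨hlt', by rw [Fin.lt_def, hposc]; omega⟩, hyc⟩, by omega⟩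
        · exact absurd heq' hcb
        · have hmem' : (a, c) ∈ inversions x \ inversions y := by
            refine ⟨mem_inv.mpr ⟨hab.trans hgt', by rw [Fin.lt_def, hposc]; omega⟩, ?_⟩
            intro h'
            rcases inv_btw h' hab hgt' with h'' | h''
            · exact hnot h''
            · have := (mem_inv.mp (hsub h'')).2
              rw [Fin.lt_def, hposc] at this; omega
          exact IH ((x⁻¹ a).val - (x⁻¹ c).val) (by omega) a c hmem' rfl

section LatticeBasics
variable [Lattice (Equiv.Perm (Fin m))]

lemma eq_of_inv_eq (hle : ∀ u v : Equiv.Perm (Fin m), u ≤ v ↔ inversions u ⊆ inversions v)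
    {u v : Equiv.Perm (Fin m)} (h : inversions u = inversions v) : u = v :=
  le_antisymm ((hle u v).mpr h.le) ((hle v u).mpr h.ge)

lemma one_le (hle : ∀ u v : Equiv.Perm (Fin m), u ≤ v ↔ inversions u ⊆ inversions v) (w : Equiv.Perm (Fin m)) : (1 : Equiv.Perm (Fin m)) ≤ w := by
  rw [hle, inversions_one]; exact Set.empty_subset _

lemma sup_eq {u v z : Equiv.Perm (Fin m)} (h1 : u ≤ z) (h2 : v ≤ z)
    (h3 : ∀ w, u ≤ w → v ≤ w → z ≤ w) : u ⊔ v = z :=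
  le_antisymm (sup_le h1 h2) (h3 _ le_sup_left le_sup_right)

lemma inf_eq {u v z : Equiv.Perm (Fin m)} (h1 : z ≤ u) (h2 : z ≤ v)
    (h3 : ∀ w, w ≤ u → w ≤ v → w ≤ z) : u ⊓ v = z :=
  le_antisymm (h3 _ inf_le_left inf_le_right) (le_inf h1 h2)

end LatticeBasics

section Hex
variable {n : ℕ} [Lattice (Equiv.Perm (Fin n))]

lemma hex (hle : ∀ u v : Equiv.Perm (Fin n), u ≤ v ↔ inversions u ⊆ inversions v)
    {r : Equiv.Perm (Fin n) → Equiv.Perm (Fin n) → Prop}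
    (hcong : IsLatticeCongruence r)
    (b0 : Equiv.Perm (Fin n)) (p0 p1 p2 : Fin n)
    (h01 : p0.val + 1 = p1.val) (h12 : p1.val + 1 = p2.val)
    (hic : b0 p0 < b0 p1) (hcj : b0 p1 < b0 p2)
    (hedge : r b0 (b0 * Equiv.swap p0 p1) ∨ r b0 (b0 * Equiv.swap p1 p2)) :
    r (b0 * Equiv.swap p0 p1) (b0 * Equiv.swap p0 p1 * Equiv.swap p1 p2) ∧
      r (b0 * Equiv.swap p1 p2) (b0 * Equiv.swap p1 p2 * Equiv.swap p0 p1) := by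
  obtain ⟨⟨hrefl, hsymm, htrans⟩, hsup, hinf⟩ := hcong
  set I := b0 p0 with hI
  set C := b0 p1 with hC
  set J := b0 p2 with hJ
  have hIJ : I < J := hic.trans hcj
  have hp01 : p0 ≠ p1 := fun h => by rw [h] at h01; omega
  have hp12 : p1 ≠ p2 := fun h => by rw [h] at h12; omega
  have hp02 : p0 ≠ p2 := fun h => by rw [h] at h01; omega
  set L1 := b0 * Equiv.swap p0 p1 with hL1
  set R1 := b0 * Equiv.swap p1 p2 with hR1
  set L2 := L1 * Equiv.swap p1 p2 with hL2
  set R2 := R1 * Equiv.swap p0 p1 with hR2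
  set T := L2 * Equiv.swap p0 p1 with hT
  set B := inversions b0 with hB
  -- values of the hexagon elements
  have hL1v : L1 p0 = C ∧ L1 p1 = I ∧ L1 p2 = J := by
    refine ⟨?_, ?_, ?_⟩ <;>
      simp [hL1, Equiv.Perm.mul_apply, Equiv.swap_apply_left, Equiv.swap_apply_right,
        Equiv.swap_apply_of_ne_of_ne hp02.symm hp12.symm, hI, hC, hJ]
  have hR1v : R1 p0 = I ∧ R1 p1 = J ∧ R1 p2 = C := by
    refine ⟨?_, ?_, ?_⟩ <;>
      simp [hR1, Equiv.Perm.mul_apply, Equiv.swap_apply_left, Equiv.swap_apply_right,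
        Equiv.swap_apply_of_ne_of_ne hp01 hp02, hI, hC, hJ]
  have hL2v : L2 p0 = C ∧ L2 p1 = J ∧ L2 p2 = I := by
    refine ⟨?_, ?_, ?_⟩ <;>
      simp [hL2, Equiv.Perm.mul_apply, Equiv.swap_apply_left, Equiv.swap_apply_right,
        Equiv.swap_apply_of_ne_of_ne hp01 hp02, hL1v.1, hL1v.2.1, hL1v.2.2, hI, hC, hJ]
  -- inversion sets
  obtain ⟨hA1, hn1⟩ := swap_inversions b0 p0 p1 h01 hic
  rw [← hI, ← hC, ← hB] at hA1 hn1
  obtain ⟨hA2, hn2⟩ := swap_inversions b0 p1 p2 h12 hcj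
  rw [← hC, ← hJ, ← hB] at hA2 hn2
  obtain ⟨hA3, hn3⟩ := swap_inversions L1 p1 p2 h12 (by rw [hL1v.2.1, hL1v.2.2]; exact hIJ)
  rw [hL1v.2.1, hL1v.2.2] at hA3 hn3
  obtain ⟨hA4, hn4⟩ := swap_inversions R1 p0 p1 h01 (by rw [hR1v.1, hR1v.2.1]; exact hIJ)
  rw [hR1v.1, hR1v.2.1] at hA4 hn4
  obtain ⟨hA5, hn5⟩ := swap_inversions L2 p0 p1 h01 (by rw [hL2v.1, hL2v.2.1]; exact hcj)
  rw [hL2v.1, hL2v.2.1] at hA5 hn5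
  -- distinctness of the three pairs
  have hIC' : I ≠ C := ne_of_lt hic
  have hIJ' : I ≠ J := ne_of_lt hIJ
  have hCJ' : C ≠ J := ne_of_lt hcj
  have hd1 : ((I,C) : Fin n × Fin n) ≠ (I,J) := fun h => hCJ' (congrArg Prod.snd h)
  have hd2 : ((I,C) : Fin n × Fin n) ≠ (C,J) := fun h => hIC' (congrArg Prod.fst h)
  have hd3 : ((I,J) : Fin n × Fin n) ≠ (C,J) := fun h => hIC' (congrArg Prod.fst h)
  -- order relations
  have hbL1 : b0 ≤ L1 := (hle _ _).mpr (by rw [hA1]; exact Set.subset_insert _ _)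
  have hbR1 : b0 ≤ R1 := (hle _ _).mpr (by rw [hA2]; exact Set.subset_insert _ _)
  have hL1L2 : L1 ≤ L2 := (hle _ _).mpr (by rw [hA3]; exact Set.subset_insert _ _)
  have hR1R2 : R1 ≤ R2 := (hle _ _).mpr (by rw [hA4]; exact Set.subset_insert _ _)
  have hL2T : L2 ≤ T := (hle _ _).mpr (by rw [hA5]; exact Set.subset_insert _ _)
  have hR2T : R2 ≤ T := (hle _ _).mpr (by
    intro e he
    rw [hA4, hA2] at he
    rw [hA5, hA3, hA1]
    simp only [Set.mem_insert_iff] at he ⊢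
    tauto)
  have hjoin : L1 ⊔ R1 = T := by
    refine sup_eq (hL1L2.trans hL2T) (hR1R2.trans hR2T) ?_
    intro w hw1 hw2
    rw [hle] at hw1 hw2 ⊢
    intro e he
    rw [hA5, hA3, hA1] at he
    rcases he with rfl | he
    · exact hw2 (by rw [hA2]; exact Set.mem_insert _ _)
    rcases he with rfl | he
    · exact inv_trans (hw1 (by rw [hA1]; exact Set.mem_insert _ _))
        (hw2 (by rw [hA2]; exact Set.mem_insert _ _))
    · exact hw1 (by rw [hA1]; exact he)
  have hmeetL : L1 ⊓ R2 = b0 := by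
    refine inf_eq hbL1 (hbR1.trans hR1R2) ?_
    intro w hw1 hw2
    rw [hle] at hw1 hw2 ⊢
    intro e he
    have he1 := hw1 he
    have he2 := hw2 he
    rw [hA1] at he1
    rw [hA4, hA2] at he2
    rcases he1 with rfl | he1
    · rcases he2 with h | h
      · exact absurd h hd1
      rcases h with h | h
      · exact absurd h hd2
      · exact h
    · exact he1
  have hmeetR : R1 ⊓ L2 = b0 := by
    refine inf_eq hbR1 (hbL1.trans hL1L2) ?_
    intro w hw1 hw2
    rw [hle] at hw1 hw2 ⊢
    intro e he
    have he1 := hw1 he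
    have he2 := hw2 he
    rw [hA2] at he1
    rw [hA3, hA1] at he2
    rcases he1 with rfl | he1
    · rcases he2 with h | h
      · exact absurd h.symm hd3
      rcases h with h | h
      · exact absurd h.symm hd2
      · exact h
    · exact he1
  rcases hedge with rIC | rCJ
  · have s1 : r R1 T := by
      have := hsup b0 L1 R1 R1 rIC (hrefl R1)
      rwa [sup_eq_right.mpr hbR1, hjoin] at this
    have s2a : r R1 R2 := by
      have := hinf R1 T R2 R2 s1 (hrefl R2)
      rwa [inf_eq_left.mpr hR1R2, inf_eq_right.mpr hR2T] at this
    have s2b : r b0 L2 := by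
      have := hinf R1 T L2 L2 s1 (hrefl L2)
      rwa [hmeetR, inf_eq_right.mpr hL2T] at this
    exact ⟨htrans (hsymm rIC) s2b, s2a⟩
  · have s1 : r L1 T := by
      have := hsup b0 R1 L1 L1 rCJ (hrefl L1)
      rwa [sup_eq_right.mpr hbL1, sup_comm R1 L1, hjoin] at this
    have s2a : r L1 L2 := by
      have := hinf L1 T L2 L2 s1 (hrefl L2)
      rwa [inf_eq_left.mpr hL1L2, inf_eq_right.mpr hL2T] at this
    have s2b : r b0 R2 := by
      have := hinf L1 T R2 R2 s1 (hrefl R2)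
      rwa [hmeetL, inf_eq_right.mpr hR2T] at this
    exact ⟨s2a, htrans (hsymm rCJ) s2b⟩
end Hex

section Force
variable {n : ℕ} [Lattice (Equiv.Perm (Fin n))]

lemma insert_inj {α : Type*} {e : α} {s t : Set α} (h : insert e s = insert e t)
    (hs : e ∉ s) (ht : e ∉ t) : s = t := by
  ext a
  constructor
  · intro ha
    have : a ∈ insert e t := h ▸ Set.mem_insert_of_mem _ ha
    rcases this with rfl | h'
    · exact absurd ha hs
    · exact h'
  · intro ha
    have : a ∈ insert e s := h.symm ▸ Set.mem_insert_of_mem _ ha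
    rcases this with rfl | h'
    · exact absurd ha ht
    · exact h'

lemma inversions_adj_swap {p p' : Fin n} (hpp : p.val + 1 = p'.val) :
    inversions (Equiv.swap p p') = {(p, p')} := by
  ext ⟨a, b⟩
  rw [mem_inv, Equiv.swap_inv, Set.mem_singleton_iff, Prod.mk.injEq, swap_lt_iff hpp]
  constructor
  · rintro ⟨hab, (⟨h1, _⟩ | ⟨h1, h2⟩)⟩
    · exact absurd hab (not_lt.mpr h1.le)
    · exact ⟨h1, h2⟩
  · rintro ⟨rfl, rfl⟩
    exact ⟨by rw [Fin.lt_def]; omega, Or.inr ⟨rfl, rfl⟩⟩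

lemma cover_adj (hle : ∀ u v : Equiv.Perm (Fin n), u ≤ v ↔ inversions u ⊆ inversions v)
    {x mm : Equiv.Perm (Fin n)} {i j : Fin n}
    (hcov : inversions x = insert (i, j) (inversions mm))
    (hnot : (i, j) ∉ inversions mm) :
    (x⁻¹ j).val + 1 = (x⁻¹ i).val ∧ mm = x * Equiv.swap (x⁻¹ j) (x⁻¹ i) := by
  have hij : (i, j) ∈ inversions x := by rw [hcov]; exact Set.mem_insert _ _
  have hsub : inversions mm ⊆ inversions x := by rw [hcov]; exact Set.subset_insert _ _
  obtain ⟨a, b, hab, hadj⟩ := exists_adjacent_diff hsub ⟨hij, hnot⟩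
  have habe : (a, b) = (i, j) := by
    have h1 := hab.1
    rw [hcov] at h1
    rcases h1 with h | h
    · exact h
    · exact absurd h hab.2
  have hae : a = i := congrArg Prod.fst habe
  have hbe : b = j := congrArg Prod.snd habe
  rw [hae, hbe] at hadj
  refine ⟨hadj, ?_⟩
  have hlt : i < j := hij.1
  set p := x⁻¹ j with hp
  set p' := x⁻¹ i with hp'
  have hmv : (x * Equiv.swap p p') p = i ∧ (x * Equiv.swap p p') p' = j := by
    constructor
    · rw [Equiv.Perm.mul_apply, Equiv.swap_apply_left, hp', Equiv.Perm.apply_inv_self]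
    · rw [Equiv.Perm.mul_apply, Equiv.swap_apply_right, hp, Equiv.Perm.apply_inv_self]
  obtain ⟨hswap, hnsw⟩ := swap_inversions (x * Equiv.swap p p') p p' hadj
    (by rw [hmv.1, hmv.2]; exact hlt)
  rw [hmv.1, hmv.2] at hswap hnsw
  rw [mul_assoc, Equiv.swap_mul_self, mul_one] at hswap
  exact eq_of_inv_eq hle (insert_inj (by rw [← hswap, ← hcov]) hnot hnsw)

lemma square (hle : ∀ u v : Equiv.Perm (Fin n), u ≤ v ↔ inversions u ⊆ inversions v)
    {r : Equiv.Perm (Fin n) → Equiv.Perm (Fin n) → Prop}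
    (hcong : IsLatticeCongruence r) {i j : Fin n} {mm x : Equiv.Perm (Fin n)}
    (hcov : inversions x = insert (i, j) (inversions mm))
    (hnot : (i, j) ∉ inversions mm)
    (t0 t1 : Fin n) (ht : t0.val + 1 = t1.val)
    (h0i : x t0 ≠ i) (h0j : x t0 ≠ j) (h1i : x t1 ≠ i) (h1j : x t1 ≠ j) :
    inversions (x * Equiv.swap t0 t1) = insert (i, j) (inversions (mm * Equiv.swap t0 t1)) ∧
      (i, j) ∉ inversions (mm * Equiv.swap t0 t1) ∧
      (r (mm * Equiv.swap t0 t1) (x * Equiv.swap t0 t1) → r mm x) := by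
  obtain ⟨⟨hrefl, hsymm, htrans⟩, hsup, hinf⟩ := hcong
  obtain ⟨hadj, hmeq⟩ := cover_adj hle hcov hnot
  have hmmle : mm ≤ x := (hle _ _).mpr (by rw [hcov]; exact Set.subset_insert _ _)
  -- mm agrees with x outside the positions of i and j
  have ht0 : t0 ≠ x⁻¹ j := fun h => h0j (by rw [h, Equiv.Perm.apply_inv_self])
  have ht0' : t0 ≠ x⁻¹ i := fun h => h0i (by rw [h, Equiv.Perm.apply_inv_self])
  have ht1 : t1 ≠ x⁻¹ j := fun h => h1j (by rw [h, Equiv.Perm.apply_inv_self])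
  have ht1' : t1 ≠ x⁻¹ i := fun h => h1i (by rw [h, Equiv.Perm.apply_inv_self])
  have hmm0 : mm t0 = x t0 := by
    rw [hmeq, Equiv.Perm.mul_apply, Equiv.swap_apply_of_ne_of_ne ht0 ht0']
  have hmm1 : mm t1 = x t1 := by
    rw [hmeq, Equiv.Perm.mul_apply, Equiv.swap_apply_of_ne_of_ne ht1 ht1']
  have hune : x t0 ≠ x t1 := fun h => by
    have := x.injective h
    rw [Fin.ext_iff] at this; omega
  have hijuv : ((i, j) : Fin n × Fin n) ≠ (x t0, x t1) := fun h => h0i (congrArg Prod.fst h).symm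
  have hijvu : ((i, j) : Fin n × Fin n) ≠ (x t1, x t0) := fun h => h1i (congrArg Prod.fst h).symm
  rcases lt_or_gt_of_ne hune with hlt | hgt
  · -- ascending step
    obtain ⟨hx2, hx2n⟩ := swap_inversions x t0 t1 ht hlt
    obtain ⟨hm2, hm2n⟩ := swap_inversions mm t0 t1 ht (by rw [hmm0, hmm1]; exact hlt)
    rw [hmm0, hmm1] at hm2 hm2n
    have hcov2 : inversions (x * Equiv.swap t0 t1) = insert (i, j) (inversions (mm * Equiv.swap t0 t1)) := by
      rw [hx2, hcov, hm2, Set.insert_comm]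
    have hnot2 : (i, j) ∉ inversions (mm * Equiv.swap t0 t1) := by
      rw [hm2]
      rintro (h | h)
      · exact hijuv h
      · exact hnot h
    refine ⟨hcov2, hnot2, fun hr => ?_⟩
    have hstep := hinf (mm * Equiv.swap t0 t1) (x * Equiv.swap t0 t1) x x hr (hrefl x)
    have he1 : (x * Equiv.swap t0 t1) ⊓ x = x := inf_eq_right.mpr ((hle _ _).mpr (by rw [hx2]; exact Set.subset_insert _ _))
    have he2 : (mm * Equiv.swap t0 t1) ⊓ x = mm := by
      refine inf_eq ((hle _ _).mpr (by rw [hm2]; exact Set.subset_insert _ _)) hmmle ?_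
      intro w hw1 hw2
      rw [hle] at hw1 hw2 ⊢
      intro e he
      have he1' := hw1 he
      have he2' := hw2 he
      rw [hm2] at he1'
      rw [hcov] at he2'
      rcases he1' with rfl | he1'
      · rcases he2' with h | h
        · exact absurd h.symm hijuv
        · exact h
      · exact he1'
    rwa [he1, he2] at hstep
  · -- descending step
    have hx2v : (x * Equiv.swap t0 t1) t0 = x t1 ∧ (x * Equiv.swap t0 t1) t1 = x t0 := by
      constructor
      · rw [Equiv.Perm.mul_apply, Equiv.swap_apply_left]
      · rw [Equiv.Perm.mul_apply, Equiv.swap_apply_right]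
    have hm2v : (mm * Equiv.swap t0 t1) t0 = x t1 ∧ (mm * Equiv.swap t0 t1) t1 = x t0 := by
      constructor
      · rw [Equiv.Perm.mul_apply, Equiv.swap_apply_left, hmm1]
      · rw [Equiv.Perm.mul_apply, Equiv.swap_apply_right, hmm0]
    obtain ⟨hx2, hx2n⟩ := swap_inversions (x * Equiv.swap t0 t1) t0 t1 ht (by rw [hx2v.1, hx2v.2]; exact hgt)
    rw [hx2v.1, hx2v.2] at hx2 hx2n
    rw [mul_assoc, Equiv.swap_mul_self, mul_one] at hx2
    obtain ⟨hm2, hm2n⟩ := swap_inversions (mm * Equiv.swap t0 t1) t0 t1 ht (by rw [hm2v.1, hm2v.2]; exact hgt)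
    rw [hm2v.1, hm2v.2] at hm2 hm2n
    rw [mul_assoc, Equiv.swap_mul_self, mul_one] at hm2
    -- hx2 : inversions x = insert (x t1, x t0) (inversions x2), hx2n : (x t1, x t0) ∉ inversions x2
    have hsx2 : inversions (x * Equiv.swap t0 t1) ⊆ inversions x := by rw [hx2]; exact Set.subset_insert _ _
    have hsm2 : inversions (mm * Equiv.swap t0 t1) ⊆ inversions mm := by rw [hm2]; exact Set.subset_insert _ _
    have hijx2 : (i, j) ∈ inversions (x * Equiv.swap t0 t1) := by
      have : (i, j) ∈ inversions x := by rw [hcov]; exact Set.mem_insert _ _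
      rw [hx2] at this
      rcases this with h | h
      · exact absurd h hijvu
      · exact h
    have hcov2 : inversions (x * Equiv.swap t0 t1) = insert (i, j) (inversions (mm * Equiv.swap t0 t1)) := by
      ext e
      constructor
      · intro he
        have hex : e ∈ inversions x := hsx2 he
        rw [hcov] at hex
        rcases hex with rfl | hex
        · exact Set.mem_insert _ _
        · rw [hm2] at hex
          rcases hex with rfl | hex
          · exact absurd he hx2n
          · exact Set.mem_insert_of_mem _ hex
      · intro he
        rcases he with rfl | he
        · exact hijx2
        · have hemm : e ∈ inversions mm := hsm2 he
          have hex : e ∈ inversions x := by rw [hcov]; exact Set.mem_insert_of_mem _ hemm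
          rw [hx2] at hex
          rcases hex with rfl | hex
          · exact absurd he hm2n
          · exact hex
    have hnot2 : (i, j) ∉ inversions (mm * Equiv.swap t0 t1) := fun h => hnot (hsm2 h)
    refine ⟨hcov2, hnot2, fun hr => ?_⟩
    have hstep := hsup (mm * Equiv.swap t0 t1) (x * Equiv.swap t0 t1) mm mm hr (hrefl mm)
    have he1 : (mm * Equiv.swap t0 t1) ⊔ mm = mm := sup_eq_right.mpr ((hle _ _).mpr hsm2)
    have he2 : (x * Equiv.swap t0 t1) ⊔ mm = x := by
      refine sup_eq ((hle _ _).mpr hsx2) hmmle ?_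
      intro w hw1 hw2
      rw [hle] at hw1 hw2 ⊢
      intro e he
      rw [hcov] at he
      rcases he with rfl | he
      · exact hw1 hijx2
      · exact hw2 he
    rwa [he1, he2] at hstep
end Force

section MainForce
variable {n k : ℕ} [Lattice (Equiv.Perm (Fin n))]

lemma mul_swap_inv_apply (x : Equiv.Perm (Fin n)) (t0 t1 v : Fin n) :
    (x * Equiv.swap t0 t1)⁻¹ v = Equiv.swap t0 t1 (x⁻¹ v) := by
  rw [mul_inv_rev, Equiv.Perm.mul_apply, Equiv.swap_inv]

lemma fin_ne_of_val_ne {a b : Fin n} (h : a.val ≠ b.val) : a ≠ b :=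
  fun h' => h (congrArg Fin.val h')

lemma force (hk1 : 1 ≤ k) (hkn : k < n)
    (hle : ∀ u v : Equiv.Perm (Fin n), u ≤ v ↔ inversions u ⊆ inversions v)
    {r : Equiv.Perm (Fin n) → Equiv.Perm (Fin n) → Prop}
    (hcong : IsLatticeCongruence r)
    (hgen : r 1 (Equiv.swap (⟨k - 1, Nat.lt_of_le_of_lt (Nat.sub_le k 1) hkn⟩ : Fin n) (⟨k, hkn⟩ : Fin n))) :
    ∀ i j : Fin n, i.val < k → k ≤ j.val →
      ∀ mm x : Equiv.Perm (Fin n), inversions x = insert (i, j) (inversions mm) →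
        (i, j) ∉ inversions mm → r mm x := by
  obtain ⟨⟨hrefl, hsymm, htrans⟩, hsup, hinf⟩ := hcong
  suffices H : ∀ g (i j : Fin n), j.val - i.val = g → i.val < k → k ≤ j.val →
      ∀ mm x : Equiv.Perm (Fin n), inversions x = insert (i, j) (inversions mm) →
        (i, j) ∉ inversions mm → r mm x by
    exact fun i j h1 h2 mm x h3 h4 => H _ i j rfl h1 h2 mm x h3 h4
  intro g
  induction g using Nat.strong_induction_on with
  | _ g IHg =>
  intro i j hg hik hkj mm x hcov hnot
  by_cases hg1 : j.val - i.val = 1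
  · -- base case : (i,j) = (k-1,k), use the generator directly
    have hkn1 : k - 1 < n := by omega
    have hi : i = (⟨k - 1, hkn1⟩ : Fin n) := Fin.ext (show i.val = k - 1 by omega)
    have hj : j = (⟨k, hkn⟩ : Fin n) := Fin.ext (show j.val = k by omega)
    have hgen' : r 1 (Equiv.swap i j) := by rw [hi, hj]; exact hgen
    have hinvs : inversions (Equiv.swap i j) = {(i, j)} :=
      inversions_adj_swap (by omega)
    have h1 := hsup 1 (Equiv.swap i j) mm mm hgen' (hrefl mm)
    rw [sup_eq_right.mpr (one_le hle mm)] at h1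
    have hx : Equiv.swap i j ⊔ mm = x := by
      refine sup_eq ((hle _ _).mpr ?_) ((hle _ _).mpr ?_) ?_
      · rw [hinvs, Set.singleton_subset_iff, hcov]; exact Set.mem_insert _ _
      · rw [hcov]; exact Set.subset_insert _ _
      · intro w hw1 hw2
        rw [hle] at hw1 hw2 ⊢
        intro e he
        rw [hcov] at he
        rcases he with rfl | he
        · exact hw1 (by rw [hinvs]; rfl)
        · exact hw2 he
    rwa [hx] at h1
  · -- inductive case; fix the intermediate value c
    obtain ⟨c, hcv⟩ : ∃ c : Fin n, c.val = if k ≤ i.val + 1 then k else k - 1 :=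
      ⟨⟨if k ≤ i.val + 1 then k else k - 1, by split_ifs <;> omega⟩, rfl⟩
    have hic : i.val < c.val := by rw [hcv]; split_ifs <;> omega
    have hcj : c.val < j.val := by rw [hcv]; split_ifs with h <;> omega
    have hci : c ≠ i := fin_ne_of_val_ne (by omega)
    have hcjne : c ≠ j := fin_ne_of_val_ne (by omega)
    suffices Q : ∀ d (mm x : Equiv.Perm (Fin n)),
        inversions x = insert (i, j) (inversions mm) → (i, j) ∉ inversions mm →
        (if (x⁻¹ j).val < (x⁻¹ c).val then (x⁻¹ c).val - (x⁻¹ j).val - 1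
          else (x⁻¹ j).val - (x⁻¹ c).val) = d → r mm x by
      exact Q _ mm x hcov hnot rfl
    intro d
    induction d using Nat.strong_induction_on with
    | _ d IHd =>
    intro mm x hcov hnot hd
    obtain ⟨hadj, hmeq⟩ := cover_adj hle hcov hnot
    have hq0 : (x⁻¹ c) ≠ (x⁻¹ j) := fun h => hcjne (x⁻¹.injective h)
    have hq1 : (x⁻¹ c) ≠ (x⁻¹ i) := fun h => hci (x⁻¹.injective h)
    have hq0v : (x⁻¹ c).val ≠ (x⁻¹ j).val := fun h => hq0 (Fin.ext h)
    have hq1v : (x⁻¹ c).val ≠ (x⁻¹ i).val := fun h => hq1 (Fin.ext h)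
    -- values of mm near the pair
    have hmm0 : mm (x⁻¹ j) = i := by
      rw [hmeq, Equiv.Perm.mul_apply, Equiv.swap_apply_left, Equiv.Perm.apply_inv_self]
    have hmm1 : mm (x⁻¹ i) = j := by
      rw [hmeq, Equiv.Perm.mul_apply, Equiv.swap_apply_right, Equiv.Perm.apply_inv_self]
    have hmmc : mm (x⁻¹ c) = c := by
      rw [hmeq, Equiv.Perm.mul_apply, Equiv.swap_apply_of_ne_of_ne hq0 hq1,
        Equiv.Perm.apply_inv_self]
    have hiltc : i < c := by rw [Fin.lt_def]; omega
    have hcltj : c < j := by rw [Fin.lt_def]; omega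
    rcases lt_or_gt_of_ne hq0v with hql | hqg
    · -- c sits before the pair (j,i)
      rcases eq_or_lt_of_le (show (x⁻¹ c).val + 1 ≤ (x⁻¹ j).val by omega) with hhex | hfar
      · -- hexagon case B : positions (x⁻¹ c, x⁻¹ j, x⁻¹ i)
        have h01 : (x⁻¹ c).val + 1 = (x⁻¹ j).val := hhex
        have h12 : (x⁻¹ j).val + 1 = (x⁻¹ i).val := hadj
        have hb0t0 : (mm * Equiv.swap (x⁻¹ c) (x⁻¹ j)) (x⁻¹ c) = i := by
          rw [Equiv.Perm.mul_apply, Equiv.swap_apply_left, hmm0]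
        have hb0t1 : (mm * Equiv.swap (x⁻¹ c) (x⁻¹ j)) (x⁻¹ j) = c := by
          rw [Equiv.Perm.mul_apply, Equiv.swap_apply_right, hmmc]
        have hb0t2 : (mm * Equiv.swap (x⁻¹ c) (x⁻¹ j)) (x⁻¹ i) = j := by
          rw [Equiv.Perm.mul_apply, Equiv.swap_apply_of_ne_of_ne hq1.symm
            (fin_ne_of_val_ne (by omega)), hmm1]
        have hedge : r (mm * Equiv.swap (x⁻¹ c) (x⁻¹ j))
              ((mm * Equiv.swap (x⁻¹ c) (x⁻¹ j)) * Equiv.swap (x⁻¹ c) (x⁻¹ j)) ∨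
            r (mm * Equiv.swap (x⁻¹ c) (x⁻¹ j))
              ((mm * Equiv.swap (x⁻¹ c) (x⁻¹ j)) * Equiv.swap (x⁻¹ j) (x⁻¹ i)) := by
          by_cases hck : k ≤ c.val
          · left
            obtain ⟨hcv2, hnv2⟩ := swap_inversions (mm * Equiv.swap (x⁻¹ c) (x⁻¹ j))
              (x⁻¹ c) (x⁻¹ j) h01 (by rw [hb0t0, hb0t1]; exact hiltc)
            rw [hb0t0, hb0t1] at hcv2 hnv2
            exact IHg (c.val - i.val) (by omega) i c rfl hik hck _ _ hcv2 hnv2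
          · right
            obtain ⟨hcv2, hnv2⟩ := swap_inversions (mm * Equiv.swap (x⁻¹ c) (x⁻¹ j))
              (x⁻¹ j) (x⁻¹ i) h12 (by rw [hb0t1, hb0t2]; exact hcltj)
            rw [hb0t1, hb0t2] at hcv2 hnv2
            exact IHg (j.val - c.val) (by omega) c j rfl (by omega) hkj _ _ hcv2 hnv2
        have hx := (hex hle ⟨⟨hrefl, @hsymm, @htrans⟩, hsup, hinf⟩
          (mm * Equiv.swap (x⁻¹ c) (x⁻¹ j)) (x⁻¹ c) (x⁻¹ j) (x⁻¹ i) h01 h12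
          (by rw [hb0t0, hb0t1]; exact hiltc) (by rw [hb0t1, hb0t2]; exact hcltj) hedge).1
        rw [mul_assoc, Equiv.swap_mul_self, mul_one] at hx
        have hmx : mm * Equiv.swap (x⁻¹ j) (x⁻¹ i) = x := by
          rw [hmeq, mul_assoc, Equiv.swap_mul_self, mul_one]
        rwa [hmx] at hx
      · -- square case, c far before the pair
        have hlt1 : (x⁻¹ c).val + 1 < n := by omega
        obtain ⟨t1, ht1v⟩ : ∃ t1 : Fin n, t1.val = (x⁻¹ c).val + 1 := ⟨⟨_, hlt1⟩, rfl⟩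
        have ht : (x⁻¹ c).val + 1 = t1.val := ht1v.symm
        have hxt0 : x (x⁻¹ c) = c := Equiv.Perm.apply_inv_self _ _
        have ht1p0 : t1 ≠ x⁻¹ j := fin_ne_of_val_ne (by omega)
        have ht1p1 : t1 ≠ x⁻¹ i := fin_ne_of_val_ne (by omega)
        have hxt1i : x t1 ≠ i := fun h => ht1p1 (by rw [← h, Equiv.Perm.inv_apply_self])
        have hxt1j : x t1 ≠ j := fun h => ht1p0 (by rw [← h, Equiv.Perm.inv_apply_self])
        obtain ⟨hcov2, hnot2, htransfer⟩ := square hle ⟨⟨hrefl, @hsymm, @htrans⟩, hsup, hinf⟩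
          hcov hnot (x⁻¹ c) t1 ht (by rw [hxt0]; exact hci) (by rw [hxt0]; exact hcjne)
          hxt1i hxt1j
        rw [if_neg (by omega)] at hd
        refine htransfer (IHd (d - 1) (by omega) _ _ hcov2 hnot2 ?_)
        have hc2 : (x * Equiv.swap (x⁻¹ c) t1)⁻¹ c = t1 := by
          rw [mul_swap_inv_apply, Equiv.swap_apply_left]
        have hj2 : (x * Equiv.swap (x⁻¹ c) t1)⁻¹ j = x⁻¹ j := by
          rw [mul_swap_inv_apply, Equiv.swap_apply_of_ne_of_ne hq0.symm ht1p0.symm]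
        rw [hc2, hj2]
        rw [if_neg (by omega)]
        omega
    · -- c sits after the pair (j,i)
      rcases eq_or_lt_of_le (show (x⁻¹ i).val + 1 ≤ (x⁻¹ c).val by omega) with hhex | hfar
      · -- hexagon case A : positions (x⁻¹ j, x⁻¹ i, x⁻¹ c)
        have h01 : (x⁻¹ j).val + 1 = (x⁻¹ i).val := hadj
        have h12 : (x⁻¹ i).val + 1 = (x⁻¹ c).val := hhex
        have hb0t0 : (mm * Equiv.swap (x⁻¹ i) (x⁻¹ c)) (x⁻¹ j) = i := by
          rw [Equiv.Perm.mul_apply, Equiv.swap_apply_of_ne_of_ne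
            (fin_ne_of_val_ne (by omega)) hq0.symm, hmm0]
        have hb0t1 : (mm * Equiv.swap (x⁻¹ i) (x⁻¹ c)) (x⁻¹ i) = c := by
          rw [Equiv.Perm.mul_apply, Equiv.swap_apply_left, hmmc]
        have hb0t2 : (mm * Equiv.swap (x⁻¹ i) (x⁻¹ c)) (x⁻¹ c) = j := by
          rw [Equiv.Perm.mul_apply, Equiv.swap_apply_right, hmm1]
        have hedge : r (mm * Equiv.swap (x⁻¹ i) (x⁻¹ c))
              ((mm * Equiv.swap (x⁻¹ i) (x⁻¹ c)) * Equiv.swap (x⁻¹ j) (x⁻¹ i)) ∨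
            r (mm * Equiv.swap (x⁻¹ i) (x⁻¹ c))
              ((mm * Equiv.swap (x⁻¹ i) (x⁻¹ c)) * Equiv.swap (x⁻¹ i) (x⁻¹ c)) := by
          by_cases hck : k ≤ c.val
          · left
            obtain ⟨hcv2, hnv2⟩ := swap_inversions (mm * Equiv.swap (x⁻¹ i) (x⁻¹ c))
              (x⁻¹ j) (x⁻¹ i) h01 (by rw [hb0t0, hb0t1]; exact hiltc)
            rw [hb0t0, hb0t1] at hcv2 hnv2
            exact IHg (c.val - i.val) (by omega) i c rfl hik hck _ _ hcv2 hnv2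
          · right
            obtain ⟨hcv2, hnv2⟩ := swap_inversions (mm * Equiv.swap (x⁻¹ i) (x⁻¹ c))
              (x⁻¹ i) (x⁻¹ c) h12 (by rw [hb0t1, hb0t2]; exact hcltj)
            rw [hb0t1, hb0t2] at hcv2 hnv2
            exact IHg (j.val - c.val) (by omega) c j rfl (by omega) hkj _ _ hcv2 hnv2
        have hx := (hex hle ⟨⟨hrefl, @hsymm, @htrans⟩, hsup, hinf⟩
          (mm * Equiv.swap (x⁻¹ i) (x⁻¹ c)) (x⁻¹ j) (x⁻¹ i) (x⁻¹ c) h01 h12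
          (by rw [hb0t0, hb0t1]; exact hiltc) (by rw [hb0t1, hb0t2]; exact hcltj) hedge).2
        rw [mul_assoc, Equiv.swap_mul_self, mul_one] at hx
        have hmx : mm * Equiv.swap (x⁻¹ j) (x⁻¹ i) = x := by
          rw [hmeq, mul_assoc, Equiv.swap_mul_self, mul_one]
        rwa [hmx] at hx
      · -- square case, c far after the pair
        have hge1 : 1 ≤ (x⁻¹ c).val := by omega
        obtain ⟨t0, ht0v⟩ : ∃ t0 : Fin n, t0.val = (x⁻¹ c).val - 1 :=
          ⟨⟨_, by omega⟩, rfl⟩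
        have ht : t0.val + 1 = (x⁻¹ c).val := by omega
        have hxt1 : x (x⁻¹ c) = c := Equiv.Perm.apply_inv_self _ _
        have ht0p0 : t0 ≠ x⁻¹ j := fin_ne_of_val_ne (by omega)
        have ht0p1 : t0 ≠ x⁻¹ i := fin_ne_of_val_ne (by omega)
        have hxt0i : x t0 ≠ i := fun h => ht0p1 (by rw [← h, Equiv.Perm.inv_apply_self])
        have hxt0j : x t0 ≠ j := fun h => ht0p0 (by rw [← h, Equiv.Perm.inv_apply_self])
        obtain ⟨hcov2, hnot2, htransfer⟩ := square hle ⟨⟨hrefl, @hsymm, @htrans⟩, hsup, hinf⟩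
          hcov hnot t0 (x⁻¹ c) ht hxt0i hxt0j (by rw [hxt1]; exact hci)
          (by rw [hxt1]; exact hcjne)
        rw [if_pos (by omega)] at hd
        refine htransfer (IHd (d - 1) (by omega) _ _ hcov2 hnot2 ?_)
        have hc2 : (x * Equiv.swap t0 (x⁻¹ c))⁻¹ c = t0 := by
          rw [mul_swap_inv_apply, Equiv.swap_apply_right]
        have hj2 : (x * Equiv.swap t0 (x⁻¹ c))⁻¹ j = x⁻¹ j := by
          rw [mul_swap_inv_apply, Equiv.swap_apply_of_ne_of_ne ht0p0.symm hq0.symm]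
        rw [hc2, hj2]
        rw [if_pos (by omega)]
        omega
end MainForce

section Reach
variable {n k : ℕ} [Lattice (Equiv.Perm (Fin n))]

lemma split_cover (hle : ∀ u v : Equiv.Perm (Fin n), u ≤ v ↔ inversions u ⊆ inversions v)
    (x : Equiv.Perm (Fin n)) {a b : Fin n} (hab : a < b)
    (hadj : (x⁻¹ b).val + 1 = (x⁻¹ a).val) :
    inversions x = insert (a, b) (inversions (x * Equiv.swap (x⁻¹ b) (x⁻¹ a))) ∧
      (a, b) ∉ inversions (x * Equiv.swap (x⁻¹ b) (x⁻¹ a)) := by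
  have hmv1 : (x * Equiv.swap (x⁻¹ b) (x⁻¹ a)) (x⁻¹ b) = a := by
    rw [Equiv.Perm.mul_apply, Equiv.swap_apply_left, Equiv.Perm.apply_inv_self]
  have hmv2 : (x * Equiv.swap (x⁻¹ b) (x⁻¹ a)) (x⁻¹ a) = b := by
    rw [Equiv.Perm.mul_apply, Equiv.swap_apply_right, Equiv.Perm.apply_inv_self]
  obtain ⟨hswap, hnsw⟩ := swap_inversions (x * Equiv.swap (x⁻¹ b) (x⁻¹ a)) (x⁻¹ b) (x⁻¹ a)
    hadj (by rw [hmv1, hmv2]; exact hab)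
  rw [hmv1, hmv2] at hswap hnsw
  rw [mul_assoc, Equiv.swap_mul_self, mul_one] at hswap
  exact ⟨hswap, hnsw⟩

lemma class_reach (hk1 : 1 ≤ k) (hkn : k < n)
    (hle : ∀ u v : Equiv.Perm (Fin n), u ≤ v ↔ inversions u ⊆ inversions v)
    {r : Equiv.Perm (Fin n) → Equiv.Perm (Fin n) → Prop}
    (hcong : IsLatticeCongruence r)
    (hgen : r 1 (Equiv.swap (⟨k - 1, Nat.lt_of_le_of_lt (Nat.sub_le k 1) hkn⟩ : Fin n) (⟨k, hkn⟩ : Fin n)))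
    {a x : Equiv.Perm (Fin n)}
    (hsub : inversions a ⊆ inversions x)
    (hdiff : ∀ e ∈ inversions x \ inversions a, e.1.val < k ∧ k ≤ e.2.val) : r a x := by
  suffices H : ∀ N (x : Equiv.Perm (Fin n)), inversions a ⊆ inversions x →
      (∀ e ∈ inversions x \ inversions a, e.1.val < k ∧ k ≤ e.2.val) →
      (inversions x \ inversions a).ncard = N → r a x by
    exact H _ x hsub hdiff rfl
  intro N
  induction N using Nat.strong_induction_on with
  | _ N IH =>
  intro x hsub hdiff hN
  by_cases heq : inversions x = inversions a
  · rw [eq_of_inv_eq hle heq]; exact hcong.1.refl a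
  · have hne : ∃ e, e ∈ inversions x \ inversions a := by
      by_contra h
      push_neg at h
      exact heq (Set.Subset.antisymm (fun e he => by_contra fun h' => h e ⟨he, h'⟩) hsub)
    obtain ⟨⟨u, v⟩, huv⟩ := hne
    obtain ⟨a', b', hab', hadj⟩ := exists_adjacent_diff hsub huv
    have hab : a' < b' := (hab'.1).1
    obtain ⟨hsplit, hnmem⟩ := split_cover hle x hab hadj
    have hsub2 : inversions a ⊆ inversions (x * Equiv.swap (x⁻¹ b') (x⁻¹ a')) := by
      intro e he
      have hex : e ∈ inversions x := hsub he
      rw [hsplit] at hex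
      rcases hex with rfl | hex
      · exact absurd he hab'.2
      · exact hex
    have hsubx : inversions (x * Equiv.swap (x⁻¹ b') (x⁻¹ a')) ⊆ inversions x := by
      rw [hsplit]; exact Set.subset_insert _ _
    have hdiffeq : inversions (x * Equiv.swap (x⁻¹ b') (x⁻¹ a')) \ inversions a =
        (inversions x \ inversions a) \ {(a', b')} := by
      ext e
      constructor
      · rintro ⟨he1, he2⟩
        exact ⟨⟨hsubx he1, he2⟩, fun h => hnmem (h ▸ he1)⟩
      · rintro ⟨⟨he1, he2⟩, he3⟩
        rw [hsplit] at he1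
        rcases he1 with rfl | he1
        · exact absurd rfl he3
        · exact ⟨he1, he2⟩
    have hcard : ((inversions x \ inversions a) \ {(a', b')}).ncard < N := by
      rw [← hN]
      exact Set.ncard_diff_singleton_lt_of_mem hab' (Set.toFinite _)
    have hr1 : r a (x * Equiv.swap (x⁻¹ b') (x⁻¹ a')) := by
      refine IH _ hcard _ hsub2 ?_ (by rw [hdiffeq])
      intro e he
      exact hdiff e ⟨hsubx he.1, he.2⟩
    have hr2 : r (x * Equiv.swap (x⁻¹ b') (x⁻¹ a')) x := by
      obtain ⟨hcr1, hcr2⟩ := hdiff (a', b') hab'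
      exact force hk1 hkn hle hcong hgen a' b' hcr1 hcr2 _ x hsplit hnmem
    exact hcong.1.trans hr1 hr2
end Reach

section Rank
variable {K N : ℕ}

noncomputable def rankF (A : Fin K → Fin N) (i : Fin K) : ℕ :=
  (Finset.univ.filter fun j => A j < A i).card

lemma rankF_lt (A : Fin K → Fin N) (i : Fin K) : rankF A i < K := by
  have hsub : (Finset.univ.filter fun j => A j < A i) ⊆ Finset.univ.erase i := by
    intro j hj
    rw [Finset.mem_filter] at hj
    exact Finset.mem_erase.mpr ⟨fun h => absurd (h ▸ hj.2) (lt_irrefl _), Finset.mem_univ _⟩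
  calc (Finset.univ.filter fun j => A j < A i).card
      ≤ (Finset.univ.erase i).card := Finset.card_le_card hsub
    _ < Finset.univ.card := Finset.card_erase_lt_of_mem (Finset.mem_univ i)
    _ = K := by rw [Finset.card_univ, Fintype.card_fin]

lemma rankF_strictMono (A : Fin K → Fin N) {i i' : Fin K} (h : A i < A i') :
    rankF A i < rankF A i' := by
  refine Finset.card_lt_card ⟨fun j hj => ?_, fun hss => ?_⟩
  · rw [Finset.mem_filter] at hj ⊢
    exact ⟨hj.1, hj.2.trans h⟩
  · have hmem : i ∈ Finset.univ.filter fun j => A j < A i' :=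
      Finset.mem_filter.mpr ⟨Finset.mem_univ _, h⟩
    have := Finset.mem_filter.mp (hss hmem)
    exact absurd this.2 (lt_irrefl _)

noncomputable def rankFin (A : Fin K → Fin N) : Fin K → Fin K :=
  fun i => ⟨rankF A i, rankF_lt A i⟩

lemma rankFin_bij {A : Fin K → Fin N} (hA : Function.Injective A) :
    Function.Bijective (rankFin A) := by
  rw [Fintype.bijective_iff_injective_and_card]
  refine ⟨fun i i' h => ?_, rfl⟩
  by_contra hne
  have hAne : A i ≠ A i' := fun h' => hne (hA h')
  rcases lt_or_gt_of_ne hAne with hlt | hgt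
  · have := rankF_strictMono A hlt
    rw [show rankF A i = (rankFin A i).val from rfl, show rankF A i' = (rankFin A i').val from rfl,
      h] at this
    exact absurd this (lt_irrefl _)
  · have := rankF_strictMono A hgt
    rw [show rankF A i = (rankFin A i).val from rfl, show rankF A i' = (rankFin A i').val from rfl,
      h] at this
    exact absurd this (lt_irrefl _)

noncomputable def rankPerm (A : Fin K → Fin N) (hA : Function.Injective A) :
    Equiv.Perm (Fin K) :=
  (Equiv.ofBijective _ (rankFin_bij hA)).symm

lemma rankPerm_inv_apply (A : Fin K → Fin N) (hA : Function.Injective A) (i : Fin K) :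
    (rankPerm A hA)⁻¹ i = rankFin A i := rfl

lemma rankPerm_lt_iff (A : Fin K → Fin N) (hA : Function.Injective A) {i i' : Fin K} :
    (rankPerm A hA)⁻¹ i' < (rankPerm A hA)⁻¹ i ↔ A i' < A i := by
  rw [rankPerm_inv_apply, rankPerm_inv_apply]
  constructor
  · intro h
    rcases lt_trichotomy (A i') (A i) with h' | h' | h'
    · exact h'
    · rw [hA h'] at h; exact absurd h (lt_irrefl _)
    · have := rankF_strictMono A h'
      rw [Fin.lt_def] at h
      exact absurd (h.trans this) (lt_irrefl _)
  · intro h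
    rw [Fin.lt_def]
    exact rankF_strictMono A h

lemma inversions_rankPerm (A : Fin K → Fin N) (hA : Function.Injective A) :
    inversions (rankPerm A hA) = {p | p.1 < p.2 ∧ A p.2 < A p.1} := by
  ext ⟨i, i'⟩
  rw [mem_inv, Set.mem_setOf_eq]
  exact and_congr_right fun _ => rankPerm_lt_iff A hA
end Rank

section Shuffle
variable {n k : ℕ}

def embS (hkn : k < n) (i : Fin k) : Fin n := ⟨i.val, i.isLt.trans hkn⟩
def embB (hkn : k < n) (s : Fin (n - k)) : Fin n := ⟨k + s.val, by omega⟩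

lemma embS_inj {hkn : k < n} {i i' : Fin k} (h : embS hkn i = embS hkn i') : i = i' := by
  have := congrArg Fin.val h
  simp only [embS] at this
  exact Fin.ext this
lemma embB_inj {hkn : k < n} {s s' : Fin (n-k)} (h : embB hkn s = embB hkn s') : s = s' := by
  have := congrArg Fin.val h
  simp only [embB] at this
  exact Fin.ext (by omega)

lemma decompSB (hkn : k < n) (a : Fin n) :
    (∃ i, a = embS hkn i) ∨ (∃ s, a = embB hkn s) := by
  by_cases h : a.val < k
  · exact Or.inl ⟨⟨a.val, h⟩, Fin.ext rfl⟩
  · have : a.val < n := a.isLt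
    exact Or.inr ⟨⟨a.val - k, by omega⟩, Fin.ext (by simp [embB]; omega)⟩

def eqP (hkn : k < n) : Fin k ⊕ Fin (n - k) ≃ Fin n :=
  finSumFinEquiv.trans (finCongr (by omega))
def eqPa (hkn : k < n) : Fin (n - k) ⊕ Fin k ≃ Fin n :=
  finSumFinEquiv.trans (finCongr (by omega))
def eqPb (hkn : k < n) : Fin (n - k) ⊕ Fin k ≃ Fin n :=
  (Equiv.sumComm _ _).trans (eqP hkn)

lemma eqP_inl (hkn : k < n) (i : Fin k) : eqP hkn (Sum.inl i) = embS hkn i := by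
  apply Fin.ext; simp [eqP, embS]
lemma eqP_inr (hkn : k < n) (s : Fin (n - k)) : eqP hkn (Sum.inr s) = embB hkn s := by
  apply Fin.ext; simp [eqP, embB]
lemma eqPa_inl (hkn : k < n) (s : Fin (n - k)) :
    (eqPa hkn (Sum.inl s)).val = s.val := by simp [eqPa]
lemma eqPa_inr (hkn : k < n) (i : Fin k) :
    (eqPa hkn (Sum.inr i)).val = (n - k) + i.val := by simp [eqPa]
lemma eqPb_inl (hkn : k < n) (s : Fin (n - k)) : eqPb hkn (Sum.inl s) = embB hkn s := by
  simp [eqPb, eqP_inr]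
lemma eqPb_inr (hkn : k < n) (i : Fin k) : eqPb hkn (Sum.inr i) = embS hkn i := by
  simp [eqPb, eqP_inl]

def shuffle (hkn : k < n) (u : Equiv.Perm (Fin k)) (v : Equiv.Perm (Fin (n - k))) :
    Equiv.Perm (Fin n) :=
  ((eqP hkn).symm.trans (u.sumCongr v)).trans (eqP hkn)

def antishuffle (hkn : k < n) (u : Equiv.Perm (Fin k)) (v : Equiv.Perm (Fin (n - k))) :
    Equiv.Perm (Fin n) :=
  ((eqPa hkn).symm.trans (v.sumCongr u)).trans (eqPb hkn)

lemma shuffle_apply_S (hkn : k < n) (u : Equiv.Perm (Fin k)) (v : Equiv.Perm (Fin (n - k)))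
    (i : Fin k) : shuffle hkn u v (embS hkn i) = embS hkn (u i) := by
  rw [shuffle]
  simp only [Equiv.trans_apply]
  rw [← eqP_inl hkn i, Equiv.symm_apply_apply, Equiv.sumCongr_apply, Sum.map_inl, eqP_inl]
lemma shuffle_apply_B (hkn : k < n) (u : Equiv.Perm (Fin k)) (v : Equiv.Perm (Fin (n - k)))
    (s : Fin (n - k)) : shuffle hkn u v (embB hkn s) = embB hkn (v s) := by
  rw [shuffle]
  simp only [Equiv.trans_apply]
  rw [← eqP_inr hkn s, Equiv.symm_apply_apply, Equiv.sumCongr_apply, Sum.map_inr, eqP_inr]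

lemma shuffle_inv_S (hkn : k < n) (u : Equiv.Perm (Fin k)) (v : Equiv.Perm (Fin (n - k)))
    (i : Fin k) : (shuffle hkn u v)⁻¹ (embS hkn i) = embS hkn (u⁻¹ i) := by
  rw [Equiv.Perm.inv_def, Equiv.symm_apply_eq, shuffle_apply_S, Equiv.Perm.inv_def,
    Equiv.apply_symm_apply]
lemma shuffle_inv_B (hkn : k < n) (u : Equiv.Perm (Fin k)) (v : Equiv.Perm (Fin (n - k)))
    (s : Fin (n - k)) : (shuffle hkn u v)⁻¹ (embB hkn s) = embB hkn (v⁻¹ s) := by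
  rw [Equiv.Perm.inv_def, Equiv.symm_apply_eq, shuffle_apply_B, Equiv.Perm.inv_def,
    Equiv.apply_symm_apply]

lemma anti_apply_inl (hkn : k < n) (u : Equiv.Perm (Fin k)) (v : Equiv.Perm (Fin (n - k)))
    (s : Fin (n - k)) : antishuffle hkn u v (eqPa hkn (Sum.inl s)) = embB hkn (v s) := by
  rw [antishuffle]
  simp only [Equiv.trans_apply]
  rw [Equiv.symm_apply_apply, Equiv.sumCongr_apply, Sum.map_inl, eqPb_inl]
lemma anti_apply_inr (hkn : k < n) (u : Equiv.Perm (Fin k)) (v : Equiv.Perm (Fin (n - k)))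
    (i : Fin k) : antishuffle hkn u v (eqPa hkn (Sum.inr i)) = embS hkn (u i) := by
  rw [antishuffle]
  simp only [Equiv.trans_apply]
  rw [Equiv.symm_apply_apply, Equiv.sumCongr_apply, Sum.map_inr, eqPb_inr]

lemma anti_inv_S (hkn : k < n) (u : Equiv.Perm (Fin k)) (v : Equiv.Perm (Fin (n - k)))
    (i : Fin k) : (antishuffle hkn u v)⁻¹ (embS hkn i) = eqPa hkn (Sum.inr (u⁻¹ i)) := by
  rw [Equiv.Perm.inv_def, Equiv.symm_apply_eq, anti_apply_inr, Equiv.Perm.inv_def,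
    Equiv.apply_symm_apply]
lemma anti_inv_B (hkn : k < n) (u : Equiv.Perm (Fin k)) (v : Equiv.Perm (Fin (n - k)))
    (s : Fin (n - k)) : (antishuffle hkn u v)⁻¹ (embB hkn s) = eqPa hkn (Sum.inl (v⁻¹ s)) := by
  rw [Equiv.Perm.inv_def, Equiv.symm_apply_eq, anti_apply_inl, Equiv.Perm.inv_def,
    Equiv.apply_symm_apply]

lemma mem_inversions_shuffle (hkn : k < n) (u : Equiv.Perm (Fin k))
    (v : Equiv.Perm (Fin (n - k))) (a b : Fin n) :
    (a, b) ∈ inversions (shuffle hkn u v) ↔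
      (∃ i i', a = embS hkn i ∧ b = embS hkn i' ∧ (i, i') ∈ inversions u) ∨
        (∃ s s', a = embB hkn s ∧ b = embB hkn s' ∧ (s, s') ∈ inversions v) := by
  rcases decompSB hkn a with ⟨i, rfl⟩ | ⟨s, rfl⟩ <;> rcases decompSB hkn b with ⟨i', rfl⟩ | ⟨s', rfl⟩
  · rw [mem_inv, shuffle_inv_S, shuffle_inv_S]
    constructor
    · rintro ⟨h1, h2⟩
      rw [Fin.lt_def] at h1 h2
      simp only [embS] at h1 h2
      exact Or.inl ⟨i, i', rfl, rfl, mem_inv.mpr ⟨Fin.lt_def.mpr h1, Fin.lt_def.mpr h2⟩⟩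
    · rintro (⟨j, j', hj, hj', hmem⟩ | ⟨t, t', ht, _, _⟩)
      · obtain rfl := embS_inj hj
        obtain rfl := embS_inj hj'
        obtain ⟨h1, h2⟩ := mem_inv.mp hmem
        rw [Fin.lt_def] at h1 h2
        constructor
        · rw [Fin.lt_def]; simp only [embS]; exact h1
        · rw [Fin.lt_def]; simp only [embS]; exact h2
      · exact absurd (congrArg Fin.val ht) (by simp [embS, embB]; omega)
  · rw [mem_inv, shuffle_inv_S, shuffle_inv_B]
    constructor
    · rintro ⟨h1, h2⟩
      rw [Fin.lt_def] at h2
      simp only [embS, embB] at h2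
      omega
    · rintro (⟨j, j', _, hj', _⟩ | ⟨t, t', ht, _, _⟩)
      · exact absurd (congrArg Fin.val hj') (by simp [embS, embB]; omega)
      · exact absurd (congrArg Fin.val ht) (by simp [embS, embB]; omega)
  · rw [mem_inv]
    constructor
    · rintro ⟨h1, h2⟩
      rw [Fin.lt_def] at h1
      simp only [embS, embB] at h1
      omega
    · rintro (⟨j, j', hj, _, _⟩ | ⟨t, t', _, ht', _⟩)
      · exact absurd (congrArg Fin.val hj) (by simp [embS, embB]; omega)
      · exact absurd (congrArg Fin.val ht') (by simp [embS, embB]; omega)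
  · rw [mem_inv, shuffle_inv_B, shuffle_inv_B]
    constructor
    · rintro ⟨h1, h2⟩
      rw [Fin.lt_def] at h1 h2
      simp only [embB] at h1 h2
      exact Or.inr ⟨s, s', rfl, rfl, mem_inv.mpr ⟨Fin.lt_def.mpr (by omega),
        Fin.lt_def.mpr (by omega)⟩⟩
    · rintro (⟨j, j', hj, _, _⟩ | ⟨t, t', ht, ht', hmem⟩)
      · exact absurd (congrArg Fin.val hj) (by simp [embS, embB]; omega)
      · obtain rfl := embB_inj ht
        obtain rfl := embB_inj ht'
        obtain ⟨h1, h2⟩ := mem_inv.mp hmem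
        rw [Fin.lt_def] at h1 h2
        constructor
        · rw [Fin.lt_def]; simp only [embB]; omega
        · rw [Fin.lt_def]; simp only [embB]; omega

lemma mem_inversions_antishuffle (hkn : k < n) (u : Equiv.Perm (Fin k))
    (v : Equiv.Perm (Fin (n - k))) (a b : Fin n) :
    (a, b) ∈ inversions (antishuffle hkn u v) ↔
      (∃ i i', a = embS hkn i ∧ b = embS hkn i' ∧ (i, i') ∈ inversions u) ∨
        (∃ s s', a = embB hkn s ∧ b = embB hkn s' ∧ (s, s') ∈ inversions v) ∨
        (∃ i s, a = embS hkn i ∧ b = embB hkn s) := by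
  rcases decompSB hkn a with ⟨i, rfl⟩ | ⟨s, rfl⟩ <;> rcases decompSB hkn b with ⟨i', rfl⟩ | ⟨s', rfl⟩
  · rw [mem_inv, anti_inv_S, anti_inv_S]
    constructor
    · rintro ⟨h1, h2⟩
      rw [Fin.lt_def] at h1 h2
      simp only [embS] at h1
      rw [eqPa_inr, eqPa_inr] at h2
      exact Or.inl ⟨i, i', rfl, rfl, mem_inv.mpr ⟨Fin.lt_def.mpr h1,
        Fin.lt_def.mpr (by omega)⟩⟩
    · rintro (⟨j, j', hj, hj', hmem⟩ | h)
      · obtain rfl := embS_inj hj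
        obtain rfl := embS_inj hj'
        obtain ⟨h1, h2⟩ := mem_inv.mp hmem
        rw [Fin.lt_def] at h1 h2
        constructor
        · rw [Fin.lt_def]; simp only [embS]; exact h1
        · rw [Fin.lt_def, eqPa_inr, eqPa_inr]; omega
      · rcases h with ⟨t, t', ht, _, _⟩ | ⟨j, t, _, ht⟩
        · exact absurd (congrArg Fin.val ht) (by simp [embS, embB]; omega)
        · exact absurd (congrArg Fin.val ht) (by simp [embS, embB]; omega)
  · rw [mem_inv, anti_inv_S, anti_inv_B]
    constructor
    · rintro ⟨h1, _⟩
      exact Or.inr (Or.inr ⟨i, s', rfl, rfl⟩)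
    · rintro (⟨j, j', _, hj', _⟩ | h)
      · exact absurd (congrArg Fin.val hj') (by simp [embS, embB]; omega)
      · constructor
        · rw [Fin.lt_def]; simp only [embS, embB]; omega
        · rw [Fin.lt_def, eqPa_inr, eqPa_inl]
          have := (v⁻¹ s').isLt
          omega
  · rw [mem_inv]
    constructor
    · rintro ⟨h1, _⟩
      rw [Fin.lt_def] at h1
      simp only [embS, embB] at h1
      omega
    · rintro (⟨j, j', hj, _, _⟩ | h)
      · exact absurd (congrArg Fin.val hj) (by simp [embS, embB]; omega)
      · rcases h with ⟨t, t', _, ht', _⟩ | ⟨j, t, hj, _⟩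
        · exact absurd (congrArg Fin.val ht') (by simp [embS, embB]; omega)
        · exact absurd (congrArg Fin.val hj) (by simp [embS, embB]; omega)
  · rw [mem_inv, anti_inv_B, anti_inv_B]
    constructor
    · rintro ⟨h1, h2⟩
      rw [Fin.lt_def] at h1
      simp only [embB] at h1
      rw [Fin.lt_def, eqPa_inl, eqPa_inl] at h2
      exact Or.inr (Or.inl ⟨s, s', rfl, rfl, mem_inv.mpr ⟨Fin.lt_def.mpr (by omega),
        Fin.lt_def.mpr h2⟩⟩)
    · rintro (⟨j, j', hj, _, _⟩ | h)
      · exact absurd (congrArg Fin.val hj) (by simp [embS, embB]; omega)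
      · rcases h with ⟨t, t', ht, ht', hmem⟩ | ⟨j, t, hj, _⟩
        · obtain rfl := embB_inj ht
          obtain rfl := embB_inj ht'
          obtain ⟨h1, h2⟩ := mem_inv.mp hmem
          rw [Fin.lt_def] at h1 h2
          constructor
          · rw [Fin.lt_def]; simp only [embB]; omega
          · rw [Fin.lt_def, eqPa_inl, eqPa_inl]; omega
        · exact absurd (congrArg Fin.val hj) (by simp [embS, embB]; omega)
end Shuffle

section Fmap
variable {n k : ℕ}

noncomputable def fmap (hkn : k < n) (w : Equiv.Perm (Fin n)) :
    Equiv.Perm (Fin k) × Equiv.Perm (Fin (n - k)) :=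
  (rankPerm (fun i => w⁻¹ (embS hkn i)) (fun a b h => embS_inj (w⁻¹.injective h)),
   rankPerm (fun s => w⁻¹ (embB hkn s)) (fun a b h => embB_inj (w⁻¹.injective h)))

lemma mem_fmap_fst (hkn : k < n) (w : Equiv.Perm (Fin n)) {i i' : Fin k} :
    (i, i') ∈ inversions (fmap hkn w).1 ↔ (embS hkn i, embS hkn i') ∈ inversions w := by
  rw [fmap]
  have hA : Function.Injective (fun i => w⁻¹ (embS hkn i)) := fun a b h => embS_inj (w⁻¹.injective h)
  refine (Set.ext_iff.mp (inversions_rankPerm _ hA) (i, i')).trans ?_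
  rw [Set.mem_setOf_eq, mem_inv]
  dsimp only
  constructor
  · rintro ⟨h1, h2⟩
    exact ⟨by rw [Fin.lt_def] at h1 ⊢; exact h1, h2⟩
  · rintro ⟨h1, h2⟩
    exact ⟨by rw [Fin.lt_def] at h1 ⊢; exact h1, h2⟩

lemma mem_fmap_snd (hkn : k < n) (w : Equiv.Perm (Fin n)) {s s' : Fin (n - k)} :
    (s, s') ∈ inversions (fmap hkn w).2 ↔ (embB hkn s, embB hkn s') ∈ inversions w := by
  rw [fmap]
  have hA : Function.Injective (fun s => w⁻¹ (embB hkn s)) := fun a b h => embB_inj (w⁻¹.injective h)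
  refine (Set.ext_iff.mp (inversions_rankPerm _ hA) (s, s')).trans ?_
  rw [Set.mem_setOf_eq, mem_inv]
  dsimp only
  constructor
  · rintro ⟨h1, h2⟩
    refine ⟨?_, h2⟩
    rw [Fin.lt_def] at h1 ⊢
    simp only [embB]
    omega
  · rintro ⟨h1, h2⟩
    refine ⟨?_, h2⟩
    rw [Fin.lt_def] at h1 ⊢
    simp only [embB] at h1
    omega

variable [Lattice (Equiv.Perm (Fin n))] [Lattice (Equiv.Perm (Fin k))]
  [Lattice (Equiv.Perm (Fin (n - k)))]

variable (hkn : k < n)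
  (hn : ∀ u v : Equiv.Perm (Fin n), u ≤ v ↔ inversions u ⊆ inversions v)
  (hk : ∀ u v : Equiv.Perm (Fin k), u ≤ v ↔ inversions u ⊆ inversions v)
  (hnk : ∀ u v : Equiv.Perm (Fin (n - k)), u ≤ v ↔ inversions u ⊆ inversions v)

include hkn hn hk hnk

lemma adj1 (a : Equiv.Perm (Fin n)) (cc : Equiv.Perm (Fin k) × Equiv.Perm (Fin (n - k))) :
    fmap hkn a ≤ cc ↔ a ≤ antishuffle hkn cc.1 cc.2 := by
  rw [Prod.le_def, hk, hnk, hn]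
  constructor
  · rintro ⟨h1, h2⟩ ⟨x, y⟩ hxy
    rw [mem_inversions_antishuffle]
    rcases decompSB hkn x with ⟨i, rfl⟩ | ⟨s, rfl⟩ <;> rcases decompSB hkn y with ⟨i', rfl⟩ | ⟨s', rfl⟩
    · exact Or.inl ⟨i, i', rfl, rfl, h1 ((mem_fmap_fst hkn a).mpr hxy)⟩
    · exact Or.inr (Or.inr ⟨i, s', rfl, rfl⟩)
    · have := (mem_inv.mp hxy).1
      rw [Fin.lt_def] at this
      simp only [embS, embB] at this
      omega
    · exact Or.inr (Or.inl ⟨s, s', rfl, rfl, h2 ((mem_fmap_snd hkn a).mpr hxy)⟩)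
  · intro h
    constructor
    · intro ⟨i, i'⟩ hmem
      have := h ((mem_fmap_fst hkn a).mp hmem)
      rw [mem_inversions_antishuffle] at this
      rcases this with ⟨j, j', hj, hj', hm⟩ | ⟨t, t', ht, _, _⟩ | ⟨j, t, _, ht⟩
      · obtain rfl := embS_inj hj
        obtain rfl := embS_inj hj'
        exact hm
      · exact absurd (congrArg Fin.val ht) (by simp [embS, embB]; omega)
      · exact absurd (congrArg Fin.val ht) (by simp [embS, embB]; omega)
    · intro ⟨s, s'⟩ hmem
      have := h ((mem_fmap_snd hkn a).mp hmem)
      rw [mem_inversions_antishuffle] at this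
      rcases this with ⟨j, j', hj, _, _⟩ | ⟨t, t', ht, ht', hm⟩ | ⟨j, t, hj, _⟩
      · exact absurd (congrArg Fin.val hj) (by simp [embS, embB]; omega)
      · obtain rfl := embB_inj ht
        obtain rfl := embB_inj ht'
        exact hm
      · exact absurd (congrArg Fin.val hj) (by simp [embS, embB]; omega)

lemma adj2 (cc : Equiv.Perm (Fin k) × Equiv.Perm (Fin (n - k))) (a : Equiv.Perm (Fin n)) :
    shuffle hkn cc.1 cc.2 ≤ a ↔ cc ≤ fmap hkn a := by
  rw [Prod.le_def, hk, hnk, hn]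
  constructor
  · intro h
    constructor
    · intro ⟨i, i'⟩ hmem
      rw [mem_fmap_fst]
      refine h ?_
      rw [mem_inversions_shuffle]
      exact Or.inl ⟨i, i', rfl, rfl, hmem⟩
    · intro ⟨s, s'⟩ hmem
      rw [mem_fmap_snd]
      refine h ?_
      rw [mem_inversions_shuffle]
      exact Or.inr ⟨s, s', rfl, rfl, hmem⟩
  · rintro ⟨h1, h2⟩ ⟨x, y⟩ hxy
    rw [mem_inversions_shuffle] at hxy
    rcases hxy with ⟨i, i', rfl, rfl, hm⟩ | ⟨s, s', rfl, rfl, hm⟩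
    · exact (mem_fmap_fst hkn a).mp (h1 hm)
    · exact (mem_fmap_snd hkn a).mp (h2 hm)

lemma fmap_shuffle (cc : Equiv.Perm (Fin k) × Equiv.Perm (Fin (n - k))) :
    fmap hkn (shuffle hkn cc.1 cc.2) = cc := by
  have e1 : inversions (fmap hkn (shuffle hkn cc.1 cc.2)).1 = inversions cc.1 := by
    ext ⟨i, i'⟩
    rw [mem_fmap_fst, mem_inversions_shuffle]
    constructor
    · rintro (⟨j, j', hj, hj', hm⟩ | ⟨t, t', ht, _, _⟩)
      · obtain rfl := embS_inj hj
        obtain rfl := embS_inj hj'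
        exact hm
      · exact absurd (congrArg Fin.val ht) (by simp [embS, embB]; omega)
    · intro hm
      exact Or.inl ⟨i, i', rfl, rfl, hm⟩
  have e2 : inversions (fmap hkn (shuffle hkn cc.1 cc.2)).2 = inversions cc.2 := by
    ext ⟨s, s'⟩
    rw [mem_fmap_snd, mem_inversions_shuffle]
    constructor
    · rintro (⟨j, j', hj, _, _⟩ | ⟨t, t', ht, ht', hm⟩)
      · exact absurd (congrArg Fin.val hj) (by simp [embS, embB]; omega)
      · obtain rfl := embB_inj ht
        obtain rfl := embB_inj ht'
        exact hm
    · intro hm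
      exact Or.inr ⟨s, s', rfl, rfl, hm⟩
  exact Prod.ext (eq_of_inv_eq hk e1) (eq_of_inv_eq hnk e2)

lemma fmap_mono {a b : Equiv.Perm (Fin n)} (h : a ≤ b) : fmap hkn a ≤ fmap hkn b := by
  rw [adj1 hkn hn hk hnk]
  refine h.trans ?_
  rw [← adj1 hkn hn hk hnk]

lemma fmap_sup (a b : Equiv.Perm (Fin n)) :
    fmap hkn (a ⊔ b) = fmap hkn a ⊔ fmap hkn b := by
  refine le_antisymm ?_ (sup_le (fmap_mono hkn hn hk hnk le_sup_left)
    (fmap_mono hkn hn hk hnk le_sup_right))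
  rw [adj1 hkn hn hk hnk]
  refine sup_le ?_ ?_
  · rw [← adj1 hkn hn hk hnk]; exact le_sup_left
  · rw [← adj1 hkn hn hk hnk]; exact le_sup_right

lemma fmap_inf (a b : Equiv.Perm (Fin n)) :
    fmap hkn (a ⊓ b) = fmap hkn a ⊓ fmap hkn b := by
  refine le_antisymm (le_inf (fmap_mono hkn hn hk hnk inf_le_left)
    (fmap_mono hkn hn hk hnk inf_le_right)) ?_
  rw [← adj2 hkn hn hk hnk]
  refine le_inf ?_ ?_
  · rw [adj2 hkn hn hk hnk]; exact inf_le_left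
  · rw [adj2 hkn hn hk hnk]; exact inf_le_right
end Fmap

section Final
variable {n k : ℕ} [Lattice (Equiv.Perm (Fin n))] [Lattice (Equiv.Perm (Fin k))]
  [Lattice (Equiv.Perm (Fin (n - k)))]

lemma fmap_one_sigma (hk1 : 1 ≤ k) (hkn : k < n)
    (hk : ∀ u v : Equiv.Perm (Fin k), u ≤ v ↔ inversions u ⊆ inversions v)
    (hnk : ∀ u v : Equiv.Perm (Fin (n - k)), u ≤ v ↔ inversions u ⊆ inversions v) :
    fmap hkn (1 : Equiv.Perm (Fin n)) =
      fmap hkn (Equiv.swap (⟨k - 1, Nat.lt_of_le_of_lt (Nat.sub_le k 1) hkn⟩ : Fin n) (⟨k, hkn⟩ : Fin n)) := by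
  have hσ : inversions (Equiv.swap (⟨k - 1, Nat.lt_of_le_of_lt (Nat.sub_le k 1) hkn⟩ : Fin n) (⟨k, hkn⟩ : Fin n)) =
      {((⟨k - 1, Nat.lt_of_le_of_lt (Nat.sub_le k 1) hkn⟩ : Fin n), (⟨k, hkn⟩ : Fin n))} :=
    inversions_adj_swap (by simp; omega)
  have c1 : inversions (fmap hkn (1 : Equiv.Perm (Fin n))).1 = ∅ := by
    ext ⟨i, i'⟩
    rw [mem_fmap_fst, inversions_one]
    simp
  have c2 : inversions (fmap hkn (1 : Equiv.Perm (Fin n))).2 = ∅ := by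
    ext ⟨s, s'⟩
    rw [mem_fmap_snd, inversions_one]
    simp
  have c3 : inversions (fmap hkn (Equiv.swap (⟨k - 1, Nat.lt_of_le_of_lt (Nat.sub_le k 1) hkn⟩ : Fin n)
      (⟨k, hkn⟩ : Fin n))).1 = ∅ := by
    ext ⟨i, i'⟩
    rw [mem_fmap_fst, hσ]
    simp only [Set.mem_singleton_iff, Prod.mk.injEq, Set.mem_empty_iff_false, iff_false, not_and]
    intro _ h
    have := congrArg Fin.val h
    simp only [embS] at this
    have := i'.isLt
    omega
  have c4 : inversions (fmap hkn (Equiv.swap (⟨k - 1, Nat.lt_of_le_of_lt (Nat.sub_le k 1) hkn⟩ : Fin n)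
      (⟨k, hkn⟩ : Fin n))).2 = ∅ := by
    ext ⟨s, s'⟩
    rw [mem_fmap_snd, hσ]
    simp only [Set.mem_singleton_iff, Prod.mk.injEq, Set.mem_empty_iff_false, iff_false, not_and]
    intro h
    have := congrArg Fin.val h
    simp only [embB] at this
    omega
  exact Prod.ext (eq_of_inv_eq hk (c1.trans c3.symm)) (eq_of_inv_eq hnk (c2.trans c4.symm))

lemma reach_G (hk1 : 1 ≤ k) (hkn : k < n)
    (hn : ∀ u v : Equiv.Perm (Fin n), u ≤ v ↔ inversions u ⊆ inversions v)
    (hk : ∀ u v : Equiv.Perm (Fin k), u ≤ v ↔ inversions u ⊆ inversions v)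
    (hnk : ∀ u v : Equiv.Perm (Fin (n - k)), u ≤ v ↔ inversions u ⊆ inversions v)
    {r : Equiv.Perm (Fin n) → Equiv.Perm (Fin n) → Prop}
    (hcong : IsLatticeCongruence r)
    (hgen : r 1 (Equiv.swap (⟨k - 1, Nat.lt_of_le_of_lt (Nat.sub_le k 1) hkn⟩ : Fin n) (⟨k, hkn⟩ : Fin n)))
    (a : Equiv.Perm (Fin n)) :
    r a (antishuffle hkn (fmap hkn a).1 (fmap hkn a).2) := by
  refine class_reach hk1 hkn hn hcong hgen ?_ ?_
  · exact (hn _ _).mp ((adj1 hkn hn hk hnk a (fmap hkn a)).mp le_rfl)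
  · rintro ⟨x, y⟩ ⟨hmem, hnmem⟩
    rw [mem_inversions_antishuffle] at hmem
    rcases hmem with ⟨i, i', rfl, rfl, hm⟩ | ⟨s, s', rfl, rfl, hm⟩ | ⟨i, s, rfl, rfl⟩
    · exact absurd ((mem_fmap_fst hkn a).mp hm) hnmem
    · exact absurd ((mem_fmap_snd hkn a).mp hm) hnmem
    · exact ⟨i.isLt, by simp [embB]⟩
end Final

end S13

/-- For `1 ≤ k < n`, the quotient of the permutohedron `S_n` (the lattice of
permutations of `[n]` whose order is the weak Bruhat order, i.e. inclusion of
inversion sets) by the lattice congruence `θ(⊥, σ_k)` generated by identifying the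
identity with the adjacent transposition `σ_k = (k, k+1)` is isomorphic, as a lattice,
to the product `S_k × S_{n-k}`. -/
theorem stmt13 (n k : ℕ) (hk1 : 1 ≤ k) (hkn : k < n)
    [Lattice (Equiv.Perm (Fin n))] [Lattice (Equiv.Perm (Fin k))]
    [Lattice (Equiv.Perm (Fin (n - k)))]
    (hn : ∀ u v : Equiv.Perm (Fin n), u ≤ v ↔ inversions u ⊆ inversions v)
    (hk : ∀ u v : Equiv.Perm (Fin k), u ≤ v ↔ inversions u ⊆ inversions v)
    (hnk : ∀ u v : Equiv.Perm (Fin (n - k)), u ≤ v ↔ inversions u ⊆ inversions v) :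
    ∃ f : Equiv.Perm (Fin n) → Equiv.Perm (Fin k) × Equiv.Perm (Fin (n - k)),
      Function.Surjective f ∧
      (∀ a b, f a = f b ↔
        congGen 1 (Equiv.swap (⟨k - 1, by omega⟩ : Fin n) (⟨k, hkn⟩ : Fin n)) a b) ∧
      (∀ a b, f (a ⊔ b) = f a ⊔ f b) ∧ (∀ a b, f (a ⊓ b) = f a ⊓ f b) := by
  refine ⟨S13.fmap hkn, ?_, ?_, S13.fmap_sup hkn hn hk hnk, S13.fmap_inf hkn hn hk hnk⟩
  · intro cc
    exact ⟨S13.shuffle hkn cc.1 cc.2, S13.fmap_shuffle hkn hn hk hnk cc⟩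
  · intro a b
    constructor
    · intro hfab rr hcong hgen
      have h1 := S13.reach_G hk1 hkn hn hk hnk hcong hgen a
      have h2 := S13.reach_G hk1 hkn hn hk hnk hcong hgen b
      rw [hfab] at h1
      exact hcong.1.trans h1 (hcong.1.symm h2)
    · intro hcg
      exact hcg (fun a b => S13.fmap hkn a = S13.fmap hkn b)
        ⟨⟨fun _ => rfl, Eq.symm, Eq.trans⟩,
          fun a b c d h1 h2 => by
            show S13.fmap hkn (a ⊔ c) = S13.fmap hkn (b ⊔ d)
            rw [S13.fmap_sup hkn hn hk hnk, S13.fmap_sup hkn hn hk hnk, h1, h2],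
          fun a b c d h1 h2 => by
            show S13.fmap hkn (a ⊓ c) = S13.fmap hkn (b ⊓ d)
            rw [S13.fmap_inf hkn hn hk hnk, S13.fmap_inf hkn hn hk hnk, h1, h2]⟩
        (S13.fmap_one_sigma hk1 hkn hk hnk)
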